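/- Let H be a real Hilbert space and let u, w ∈ H satisfy ⟨w, u⟩ ≥ 0. Define the linear functional b(u, ·) : H → ℝ by b(u, q) := ⟨u, q⟩ + ⟨w, q⟩. Then √(‖u‖² + ‖w‖²) ≤ sup_{q ∈ H, q ≠ 0} b(u, q)/‖q‖. -/
import Mathlib


open RealInnerProductSpace

/-- Abstract Hilbert-space inf-sup stability lemma: if `⟨w, u⟩ ≥ 0` and
`b(u, q) := ⟨u, q⟩ + ⟨w, q⟩`, then `√(‖u‖² + ‖w‖²) ≤ sup_{q ≠ 0} b(u, q)/‖q‖`. -/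
theorem abstract_inf_sup_stability
    {H : Type*} [NormedAddCommGroup H] [InnerProductSpace ℝ H]
    (u w : H) (hwu : 0 ≤ ⟪w, u⟫) :
    Real.sqrt (‖u‖ ^ 2 + ‖w‖ ^ 2) ≤
      ⨆ q : {q : H // q ≠ 0}, (⟪u, (q : H)⟫ + ⟪w, (q : H)⟫) / ‖(q : H)‖ := by
  have hbdd : BddAbove (Set.range fun q : {q : H // q ≠ 0} =>
      (⟪u, (q : H)⟫ + ⟪w, (q : H)⟫) / ‖(q : H)‖) := by
    refine ⟨‖u‖ + ‖w‖, ?_⟩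
    rintro _ ⟨⟨q, hq⟩, rfl⟩
    have hq0 : 0 < ‖q‖ := norm_pos_iff.mpr hq
    rw [div_le_iff₀ hq0]
    calc ⟪u, q⟫ + ⟪w, q⟫ ≤ ‖u‖ * ‖q‖ + ‖w‖ * ‖q‖ :=
          add_le_add (real_inner_le_norm u q) (real_inner_le_norm w q)
      _ = (‖u‖ + ‖w‖) * ‖q‖ := by ring
  by_cases h : u + w = 0
  · -- then ⟨w,u⟩ = -‖u‖² ≥ 0 forces u = 0, w = 0
    have hw : w = -u := by linear_combination (norm := abel) h
    have hu2 : ⟪w, u⟫ = -‖u‖ ^ 2 := by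
      rw [hw, inner_neg_left, real_inner_self_eq_norm_sq]
    have hu : u = 0 := by
      have : ‖u‖ ^ 2 ≤ 0 := by rw [hu2] at hwu; linarith
      have := sq_nonneg ‖u‖
      have : ‖u‖ = 0 := by nlinarith
      exact norm_eq_zero.mp this
    have hw0 : w = 0 := by rw [hw, hu, neg_zero]
    subst hu hw0
    simp only [norm_zero]
    rw [show (0:ℝ) ^ 2 + 0 ^ 2 = 0 by ring, Real.sqrt_zero]
    rcases isEmpty_or_nonempty {q : H // q ≠ 0} with he | hne
    · rw [Real.iSup_of_isEmpty]
    · refine le_ciSup_of_le hbdd (Classical.arbitrary _) ?_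
      simp
  · have key : Real.sqrt (‖u‖ ^ 2 + ‖w‖ ^ 2) ≤
        (⟪u, (u + w)⟫ + ⟪w, (u + w)⟫) / ‖u + w‖ := by
      have hnq : 0 < ‖u + w‖ := norm_pos_iff.mpr h
      have hval : ⟪u, u + w⟫ + ⟪w, u + w⟫ = ‖u + w‖ ^ 2 := by
        rw [← inner_add_left, real_inner_self_eq_norm_sq]
      have hdv : ‖u + w‖ ^ 2 / ‖u + w‖ = ‖u + w‖ := by
        rw [sq]; exact mul_div_cancel_right₀ _ (ne_of_gt hnq)
      rw [hval, hdv]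
      have hle : ‖u‖ ^ 2 + ‖w‖ ^ 2 ≤ ‖u + w‖ ^ 2 := by
        have := norm_add_sq_real u w
        have h2 : ⟪u, w⟫ = ⟪w, u⟫ := real_inner_comm w u
        nlinarith
      calc Real.sqrt (‖u‖ ^ 2 + ‖w‖ ^ 2) ≤ Real.sqrt (‖u + w‖ ^ 2) :=
            Real.sqrt_le_sqrt hle
        _ = ‖u + w‖ := Real.sqrt_sq (norm_nonneg _)
    exact le_trans key (le_ciSup hbdd ⟨u + w, h⟩)
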